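/- Let Λ ∈ (0,1] and ζ > 1 with ζ < 1/(1−Λ) (interpreted as ζ < +∞ when Λ = 1). Then the equation ζ = c·(1 − c·tanh(Λc))/(c − tanh(Λc)) has a unique solution c ∈ (0,1). -/

import Mathlib

open Real Set

lemma my_hasDerivAt_tanh (x : ℝ) : HasDerivAt Real.tanh (1 - Real.tanh x ^ 2) x := by
  have h := ((Real.hasDerivAt_sinh x).div (Real.hasDerivAt_cosh x) (Real.cosh_pos x).ne')
  have he : ∀ y, Real.tanh y = Real.sinh y / Real.cosh y := fun y => Real.tanh_eq_sinh_div_cosh y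
  have : (Real.sinh / Real.cosh) = Real.tanh := by funext y; rw [Pi.div_apply, he]
  rw [this] at h
  refine h.congr_deriv ?_
  rw [he]
  have hc := (Real.cosh_pos x).ne'
  have hsq := Real.cosh_sq x
  field_simp

lemma my_continuous_tanh : Continuous Real.tanh := by
  have : Real.tanh = fun y => Real.sinh y / Real.cosh y := by
    funext y; exact Real.tanh_eq_sinh_div_cosh y
  rw [this]
  exact Real.continuous_sinh.div Real.continuous_cosh fun x => (Real.cosh_pos x).ne'

lemma my_tanh_pos {x : ℝ} (hx : 0 < x) : 0 < Real.tanh x := by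
  rw [Real.tanh_eq_sinh_div_cosh]
  exact div_pos (Real.sinh_pos_iff.2 hx) (Real.cosh_pos x)

lemma my_tanh_lt_one (x : ℝ) : Real.tanh x < 1 := by
  rw [Real.tanh_eq_sinh_div_cosh, div_lt_one (Real.cosh_pos x)]
  exact Real.sinh_lt_cosh x

lemma my_tanh_lt_self {x : ℝ} (hx : 0 < x) : Real.tanh x < x := by
  have key : StrictMonoOn (fun y => y - Real.tanh y) (Ici (0:ℝ)) := by
    apply strictMonoOn_of_deriv_pos (convex_Ici 0)
    · exact (continuous_id.sub my_continuous_tanh).continuousOn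
    · intro y hy
      rw [interior_Ici, mem_Ioi] at hy
      have hd : HasDerivAt (fun y => y - Real.tanh y) (1 - (1 - Real.tanh y ^ 2)) y :=
        (hasDerivAt_id y).sub (my_hasDerivAt_tanh y)
      rw [hd.deriv]
      have := my_tanh_pos hy
      nlinarith
  have := key (self_mem_Ici) (mem_Ici.2 hx.le) hx
  simp [Real.tanh_zero] at this
  linarith

theorem transcendental_eq_unique_sol_small_lambda (Λ ζ : ℝ)
    (hΛ0 : 0 < Λ) (hΛ1 : Λ ≤ 1) (hζ : 1 < ζ)
    (hζΛ : Λ < 1 → ζ < 1 / (1 - Λ)) :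
    ∃! c : ℝ, c ∈ Set.Ioo (0:ℝ) 1 ∧
      ζ = c * (1 - c * Real.tanh (Λ * c)) / (c - Real.tanh (Λ * c)) := by
  set h : ℝ → ℝ := fun c => (ζ - c^2) * Real.tanh (Λ*c) - (ζ-1)*c with hh_def
  set h1 : ℝ → ℝ := fun c =>
    (-(2*c)) * Real.tanh (Λ*c) + (ζ - c^2) * ((1 - Real.tanh (Λ*c)^2) * Λ) - (ζ-1) with h1_def
  set h2 : ℝ → ℝ := fun c =>
    -2 * Real.tanh (Λ*c) - 4*c*((1 - Real.tanh (Λ*c)^2)*Λ)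
      - (ζ - c^2) * (2*Λ^2*Real.tanh (Λ*c)*(1 - Real.tanh (Λ*c)^2)) with h2_def
  have hdt : ∀ c : ℝ, HasDerivAt (fun c => Real.tanh (Λ*c)) ((1 - Real.tanh (Λ*c)^2) * Λ) c := by
    intro c
    have := (my_hasDerivAt_tanh (Λ*c)).comp c ((hasDerivAt_id c).const_mul Λ)
    simpa [Function.comp_def] using this
  have hdh : ∀ c : ℝ, HasDerivAt h (h1 c) c := by
    intro c
    have d1 : HasDerivAt (fun c : ℝ => ζ - c^2) (-(2*c)) c := by
      have := (hasDerivAt_pow 2 c).const_sub ζ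
      simpa using this
    have := ((d1.mul (hdt c)).sub (((hasDerivAt_id c).const_mul (ζ-1))))
    refine this.congr_deriv ?_
    simp only [h1_def]; ring
  have hdh1 : ∀ c : ℝ, HasDerivAt h1 (h2 c) c := by
    intro c
    have d1 : HasDerivAt (fun c : ℝ => ζ - c^2) (-(2*c)) c := by
      have := (hasDerivAt_pow 2 c).const_sub ζ
      simpa using this
    have dneg : HasDerivAt (fun c : ℝ => -(2*c)) (-2) c := by
      have := ((hasDerivAt_id c).const_mul 2).neg
      simpa [Pi.neg_def] using this
    have dt2 : HasDerivAt (fun c => (1 - Real.tanh (Λ*c)^2) * Λ)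
        ((-(2 * Real.tanh (Λ*c) * ((1 - Real.tanh (Λ*c)^2) * Λ))) * Λ) c := by
      have hsq : HasDerivAt (fun c => Real.tanh (Λ*c)^2)
          (2 * Real.tanh (Λ*c) * ((1 - Real.tanh (Λ*c)^2) * Λ)) c := by
        have := (hdt c).pow 2
        simpa [Pi.pow_def, mul_comm, mul_assoc, mul_left_comm] using this
      have := (hsq.const_sub 1).mul_const Λ
      simpa using this
    have := ((dneg.mul (hdt c)).add (d1.mul dt2)).sub (hasDerivAt_const c (ζ-1))
    refine this.congr_deriv ?_
    simp only [h2_def]; ring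
  have ct : Continuous (fun c => Real.tanh (Λ*c)) :=
    my_continuous_tanh.comp (continuous_const.mul continuous_id)
  have hcont : Continuous h :=
    ((continuous_const.sub (continuous_pow 2)).mul ct).sub (continuous_const.mul continuous_id)
  have hcont1 : Continuous h1 := by
    apply Continuous.sub _ continuous_const
    exact ((continuous_const.mul continuous_id).neg.mul ct).add
      ((continuous_const.sub (continuous_pow 2)).mul
        ((continuous_const.sub (ct.pow 2)).mul continuous_const))
  have h0 : h 0 = 0 := by simp [hh_def]
  have h1neg : h 1 < 0 := by
    have := my_tanh_lt_one (Λ*1)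
    simp only [hh_def]
    nlinarith
  have h10pos : 0 < h1 0 := by
    simp only [h1_def]
    have ht0 : Real.tanh (Λ*0) = 0 := by rw [mul_zero, Real.tanh_zero]
    rw [ht0]
    rcases eq_or_lt_of_le hΛ1 with hE | hL
    · rw [hE]; norm_num
    · have := hζΛ hL
      rw [lt_div_iff₀ (by linarith : 0 < 1 - Λ)] at this
      nlinarith
  -- strict concavity of h on [0,1]
  have hconc : StrictConcaveOn ℝ (Set.Icc (0:ℝ) 1) h := by
    apply strictConcaveOn_of_deriv2_neg (convex_Icc 0 1) hcont.continuousOn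
    intro x hx
    rw [interior_Icc] at hx
    have e1 : deriv h = h1 := funext fun c => (hdh c).deriv
    have e2 : deriv^[2] h x = h2 x := by
      rw [Function.iterate_succ_apply', Function.iterate_one, e1, (hdh1 x).deriv]
    rw [e2]
    have htp : 0 < Real.tanh (Λ*x) := my_tanh_pos (mul_pos hΛ0 hx.1)
    have htl : Real.tanh (Λ*x) < 1 := my_tanh_lt_one (Λ*x)
    have hsq : 0 < 1 - Real.tanh (Λ*x)^2 := by nlinarith
    have hz : 0 < ζ - x^2 := by nlinarith [hx.2, hx.1]
    simp only [h2_def]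
    nlinarith [mul_pos (mul_pos (mul_pos (by positivity : (0:ℝ) < 2*Λ^2) htp) hsq) hz,
      mul_pos hx.1 (mul_pos hsq hΛ0)]
  -- find δ with h δ > 0
  have hev : ∀ᶠ x in nhds (0:ℝ), 0 < h1 x :=
    (hcont1.continuousAt).eventually_const_lt h10pos
  obtain ⟨ε, hε, hball⟩ := Metric.eventually_nhds_iff.1 hev
  set δ : ℝ := min (ε/2) (1/2) with hδ_def
  have hδpos : 0 < δ := by positivity
  have hδlt1 : δ < 1 := lt_of_le_of_lt (min_le_right _ _) (by norm_num)
  have hδε : δ < ε := lt_of_le_of_lt (min_le_left _ _) (by linarith)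
  have hmono : StrictMonoOn h (Set.Icc 0 δ) := by
    apply strictMonoOn_of_deriv_pos (convex_Icc 0 δ) hcont.continuousOn
    intro x hx
    rw [interior_Icc] at hx
    rw [(hdh x).deriv]
    apply hball
    rw [Real.dist_eq, sub_zero, abs_of_pos hx.1]
    exact lt_trans hx.2 hδε
  have hδpos' : 0 < h δ := by
    have := hmono (Set.left_mem_Icc.2 hδpos.le) (Set.right_mem_Icc.2 hδpos.le) hδpos
    rwa [h0] at this
  -- IVT
  have hivt : (0:ℝ) ∈ Set.Ioo (h 1) (h δ) := ⟨h1neg, hδpos'⟩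
  obtain ⟨c, hcmem, hczero⟩ := intermediate_value_Ioo' hδlt1.le hcont.continuousOn hivt
  have hcIoo : c ∈ Set.Ioo (0:ℝ) 1 := ⟨lt_trans hδpos hcmem.1, hcmem.2⟩
  -- equivalence
  have key : ∀ y ∈ Set.Ioo (0:ℝ) 1,
      (ζ = y * (1 - y * Real.tanh (Λ * y)) / (y - Real.tanh (Λ * y)) ↔ h y = 0) := by
    intro y hy
    have htly : Real.tanh (Λ*y) < Λ*y := my_tanh_lt_self (mul_pos hΛ0 hy.1)
    have hΛy : Λ*y ≤ y := by nlinarith [hy.1]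
    have hden : 0 < y - Real.tanh (Λ*y) := by linarith
    rw [eq_div_iff hden.ne']
    constructor
    · intro hyp; simp only [hh_def]; linear_combination -hyp
    · intro hyp; simp only [hh_def] at hyp; linear_combination -hyp
  -- at most one zero of h in (0,1)
  have huniq : ∀ a b : ℝ, a ∈ Set.Ioo (0:ℝ) 1 → b ∈ Set.Ioo (0:ℝ) 1 → a < b →
      h a = 0 → h b = 0 → False := by
    intro a b ha hb hab hza hzb
    have hwb : (0:ℝ) < b := lt_trans ha.1 hab
    have h0mem : (0:ℝ) ∈ Set.Icc (0:ℝ) 1 := Set.left_mem_Icc.2 zero_le_one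
    have hbmem : b ∈ Set.Icc (0:ℝ) 1 := ⟨hwb.le, hb.2.le⟩
    have hne : (0:ℝ) ≠ b := hwb.ne
    have hu : (0:ℝ) < (b-a)/b := div_pos (by linarith) hwb
    have hv : (0:ℝ) < a/b := div_pos ha.1 hwb
    have hsum : (b-a)/b + a/b = 1 := by field_simp; ring
    have := hconc.2 h0mem hbmem hne hu hv hsum
    rw [smul_eq_mul, smul_eq_mul, smul_eq_mul, smul_eq_mul, h0, hzb] at this
    have heq : (b-a)/b * 0 + a/b * b = a := by field_simp; ring
    rw [heq, hza] at this
    simp at this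
  refine ⟨c, ⟨hcIoo, (key c hcIoo).2 hczero⟩, ?_⟩
  rintro y ⟨hyIoo, hyeq⟩
  have hyzero := (key y hyIoo).1 hyeq
  by_contra hne
  rcases lt_or_gt_of_ne hne with hlt | hgt
  · exact huniq y c hyIoo hcIoo hlt hyzero hczero
  · exact huniq c y hcIoo hyIoo hgt hczero hyzero
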